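/- Let d ≥ 1 be an integer and M > 0, let t ≥ 0, and let u : ℝ^d → ℝ^d be measurable with |u(x)| ≤ M·min((1+‖x‖)^{−d}, (1+t)^{−d/2}) for a.e. x. Then for every α ≥ 0 and every p with 1 < p ≤ ∞ such that α + d/p < d (convention d/∞ = 0), there is a constant C > 0 depending only on d, α, p such that ‖(1+‖x‖)^α·u‖_{L^p(ℝ^d)} ≤ C·M·(1+t)^{−(1/2)(d−α−d/p)}. Moreover the same estimate holds in the limit case (α,p) = (d,∞): ess sup_x (1+‖x‖)^d·|u(x)| ≤ C·M. -/

import Mathlib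

open MeasureTheory Module
open scoped ENNReal

lemma stmt6_aux_pt (d : ℕ) {α t M v r : ℝ} (hα : 0 ≤ α) (ht : 0 ≤ t) (hM : 0 ≤ M)
    (hr : 0 ≤ r) (hv : 0 ≤ v)
    (h : v ≤ M * min ((1 + r) ^ (-(d : ℝ))) ((1 + t) ^ (-(d : ℝ) / 2))) :
    (1 + r) ^ α * v ≤ 2 ^ d * M * ((1 + t) ^ (2⁻¹ : ℝ) + r) ^ (α - d) := by
  set s : ℝ := (1 + t) ^ (2⁻¹ : ℝ) with hs_def
  have ht1 : (0:ℝ) ≤ 1 + t := by linarith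
  have hs1 : (1:ℝ) ≤ s := Real.one_le_rpow (by linarith) (by norm_num)
  have hs0 : (0:ℝ) < s := lt_of_lt_of_le one_pos hs1
  have hsr : (0:ℝ) < s + r := by linarith
  have h1r : (0:ℝ) < 1 + r := by linarith
  have hts : (1 + t) ^ (-(d : ℝ) / 2) = s ^ (-(d : ℝ)) := by
    rw [hs_def, ← Real.rpow_mul ht1]
    ring_nf
  have hmin : min ((1 + r) ^ (-(d : ℝ))) ((1 + t) ^ (-(d : ℝ) / 2))
      ≤ 2 ^ d * (s + r) ^ (-(d : ℝ)) := by
    rw [hts]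
    have h2 : (2:ℝ) ^ d * (s + r) ^ (-(d:ℝ)) = ((s + r) / 2) ^ (-(d:ℝ)) := by
      rw [Real.div_rpow hsr.le (by norm_num), Real.rpow_neg (by norm_num : (0:ℝ) ≤ 2),
        Real.rpow_natCast]
      field_simp
    rw [h2]
    rcases le_total (1 + r) s with hc | hc
    · refine le_trans (min_le_right _ _) ?_
      apply Real.rpow_le_rpow_of_nonpos (by positivity) (by linarith)
        (neg_nonpos.mpr (by positivity))
    · refine le_trans (min_le_left _ _) ?_
      apply Real.rpow_le_rpow_of_nonpos (by positivity) (by linarith)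
        (neg_nonpos.mpr (by positivity))
  have hpow : (1 + r) ^ α ≤ (s + r) ^ α :=
    Real.rpow_le_rpow h1r.le (by linarith) hα
  calc (1 + r) ^ α * v ≤ (s + r) ^ α * (M * (2 ^ d * (s + r) ^ (-(d:ℝ)))) := by
        apply mul_le_mul hpow (le_trans h (by nlinarith [hmin])) hv (by positivity)
    _ = 2 ^ d * M * ((s + r) ^ α * (s + r) ^ (-(d:ℝ))) := by ring
    _ = 2 ^ d * M * (s + r) ^ (α - d) := by
        rw [← Real.rpow_add hsr]; ring_nf

lemma stmt6_aux_int (d : ℕ) {γ : ℝ} {s : ℝ} (hs : 0 < s) :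
    ∫⁻ x : EuclideanSpace ℝ (Fin d), ENNReal.ofReal ((s + ‖x‖) ^ (-γ)) ∂volume
      = ENNReal.ofReal (s ^ ((d : ℝ) - γ)) *
        ∫⁻ y : EuclideanSpace ℝ (Fin d), ENNReal.ofReal ((1 + ‖y‖) ^ (-γ)) ∂volume := by
  have key : ∀ x : EuclideanSpace ℝ (Fin d),
      (s + ‖x‖) ^ (-γ) = s ^ (-γ) * (1 + ‖s⁻¹ • x‖) ^ (-γ) := by
    intro x
    have hn : ‖s⁻¹ • x‖ = s⁻¹ * ‖x‖ := by
      rw [norm_smul, Real.norm_eq_abs, abs_of_pos (by positivity)]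
    have h1 : 1 + ‖s⁻¹ • x‖ = s⁻¹ * (s + ‖x‖) := by
      rw [hn]; field_simp
    rw [h1, Real.mul_rpow (by positivity) (by positivity),
      Real.rpow_neg (by positivity : (0:ℝ) ≤ s⁻¹), Real.inv_rpow hs.le, inv_inv,
      ← mul_assoc, ← Real.rpow_add hs]
    simp
  have hmeas : Measurable fun y : EuclideanSpace ℝ (Fin d) =>
      ENNReal.ofReal ((1 + ‖y‖) ^ (-γ)) := by fun_prop
  calc ∫⁻ x : EuclideanSpace ℝ (Fin d), ENNReal.ofReal ((s + ‖x‖) ^ (-γ)) ∂volume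
      = ∫⁻ x : EuclideanSpace ℝ (Fin d),
          ENNReal.ofReal (s ^ (-γ)) * ENNReal.ofReal ((1 + ‖s⁻¹ • x‖) ^ (-γ)) ∂volume := by
        congr 1; ext x
        rw [key x, ENNReal.ofReal_mul (by positivity)]
    _ = ENNReal.ofReal (s ^ (-γ)) *
        ∫⁻ x : EuclideanSpace ℝ (Fin d), ENNReal.ofReal ((1 + ‖s⁻¹ • x‖) ^ (-γ)) ∂volume := by
        exact lintegral_const_mul' _ _ ENNReal.ofReal_ne_top
    _ = ENNReal.ofReal (s ^ (-γ)) *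
        ∫⁻ y, ENNReal.ofReal ((1 + ‖y‖) ^ (-γ))
          ∂(Measure.map (fun x : EuclideanSpace ℝ (Fin d) => s⁻¹ • x) volume) := by
        rw [lintegral_map hmeas (by fun_prop)]
    _ = ENNReal.ofReal (s ^ (-γ)) * (ENNReal.ofReal (s ^ (d : ℕ)) *
        ∫⁻ y : EuclideanSpace ℝ (Fin d), ENNReal.ofReal ((1 + ‖y‖) ^ (-γ)) ∂volume) := by
        rw [Measure.map_addHaar_smul volume (inv_ne_zero hs.ne'), lintegral_smul_measure]
        congr 2
        rw [finrank_euclideanSpace_fin, inv_pow, inv_inv, abs_of_pos (by positivity)]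
    _ = ENNReal.ofReal (s ^ ((d : ℝ) - γ)) *
        ∫⁻ y : EuclideanSpace ℝ (Fin d), ENNReal.ofReal ((1 + ‖y‖) ^ (-γ)) ∂volume := by
        rw [← mul_assoc, ← ENNReal.ofReal_mul (by positivity)]
        congr 2
        rw [← Real.rpow_natCast s d, ← Real.rpow_add hs]
        ring_nf

lemma stmt6_aux_g (d : ℕ) {α q s c : ℝ} (hq : 0 < q) (hγ : (d : ℝ) < ((d : ℝ) - α) * q)
    (hs : 0 < s) (hc : 0 ≤ c)
    {p : ℝ≥0∞} (hp0 : p ≠ 0) (hpt : p ≠ ⊤) (hpq : p.toReal = q) :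
    eLpNorm (fun x : EuclideanSpace ℝ (Fin d) => c * (s + ‖x‖) ^ (α - d)) p volume
      = ENNReal.ofReal (c *
          (∫⁻ y : EuclideanSpace ℝ (Fin d),
            ENNReal.ofReal ((1 + ‖y‖) ^ (-(((d : ℝ) - α) * q))) ∂volume).toReal ^ (1 / q) *
          s ^ (α - (d : ℝ) + (d : ℝ) / q)) := by
  set γ : ℝ := ((d : ℝ) - α) * q with hγ_def
  set J : ℝ≥0∞ := ∫⁻ y : EuclideanSpace ℝ (Fin d),
      ENNReal.ofReal ((1 + ‖y‖) ^ (-γ)) ∂volume with hJ_def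
  have hptw : ∀ x : EuclideanSpace ℝ (Fin d),
      ‖c * (s + ‖x‖) ^ (α - d)‖ₑ ^ q
        = ENNReal.ofReal (c ^ q) * ENNReal.ofReal ((s + ‖x‖) ^ (-γ)) := by
    intro x
    have hsx : (0:ℝ) < s + ‖x‖ := by positivity
    have hgx : (0:ℝ) ≤ c * (s + ‖x‖) ^ (α - d) := by positivity
    rw [← ofReal_norm, Real.norm_of_nonneg hgx,
      ENNReal.ofReal_rpow_of_nonneg hgx hq.le,
      Real.mul_rpow hc (by positivity), ← Real.rpow_mul hsx.le,
      ENNReal.ofReal_mul (by positivity)]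
    congr 2
    rw [hγ_def]; ring
  rw [eLpNorm_eq_lintegral_rpow_enorm_toReal hp0 hpt, hpq]
  simp_rw [hptw]
  rw [lintegral_const_mul' _ _ ENNReal.ofReal_ne_top, stmt6_aux_int d hs, ← hJ_def,
    ← mul_assoc, ENNReal.mul_rpow_of_nonneg _ _ (one_div_nonneg.mpr hq.le),
    ENNReal.mul_rpow_of_nonneg _ _ (one_div_nonneg.mpr hq.le),
    ENNReal.ofReal_rpow_of_nonneg (by positivity) (one_div_nonneg.mpr hq.le),
    ENNReal.ofReal_rpow_of_nonneg (by positivity) (one_div_nonneg.mpr hq.le)]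
  have h1 : (c ^ q) ^ (1/q) = c := by
    rw [← Real.rpow_mul hc, mul_one_div, div_self hq.ne', Real.rpow_one]
  have h2 : (s ^ ((d : ℝ) - γ)) ^ (1/q) = s ^ (α - (d:ℝ) + (d:ℝ)/q) := by
    rw [← Real.rpow_mul hs.le]
    congr 1
    rw [hγ_def]; field_simp; ring
  have h3 : J ^ (1/q) = ENNReal.ofReal (J.toReal ^ (1/q)) := by
    have hJfin : J ≠ ⊤ :=
      (finite_integral_one_add_norm (by rw [finrank_euclideanSpace_fin]; exact hγ)).ne
    conv_lhs => rw [← ENNReal.ofReal_toReal hJfin]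
    rw [ENNReal.ofReal_rpow_of_nonneg ENNReal.toReal_nonneg (one_div_nonneg.mpr hq.le)]
  rw [h1, h2, h3, ← ENNReal.ofReal_mul hc, ← ENNReal.ofReal_mul (by positivity)]
  ring_nf

/-- If `|u(x)| ≤ M min((1+‖x‖)^{−d}, (1+t)^{−d/2})` a.e., then for all
`α ≥ 0` and `1 < p ≤ ∞` with `α + d/p < d` (convention `d/∞ = 0`, realized by
`p.toReal`), there is `C > 0` depending only on `d, α, p` with
`‖(1+‖x‖)^α u‖_{L^p} ≤ C M (1+t)^{−(1/2)(d−α−d/p)}`; moreover the same holds in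
the limit case `(α,p) = (d,∞)`: `ess sup (1+‖x‖)^d |u(x)| ≤ C M`. -/
theorem stmt6 (d : ℕ) (hd : 1 ≤ d) :
    (∀ α : ℝ, 0 ≤ α → ∀ p : ℝ≥0∞, 1 < p → α + d / p.toReal < d →
      ∃ C > (0 : ℝ), ∀ M : ℝ, 0 < M → ∀ t : ℝ, 0 ≤ t →
        ∀ u : EuclideanSpace ℝ (Fin d) → EuclideanSpace ℝ (Fin d), Measurable u →
        (∀ᵐ x : EuclideanSpace ℝ (Fin d) ∂volume,
          ‖u x‖ ≤ M * min ((1 + ‖x‖) ^ (-(d : ℝ))) ((1 + t) ^ (-(d : ℝ) / 2))) →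
        eLpNorm (fun x => (1 + ‖x‖) ^ α • u x) p volume ≤
          ENNReal.ofReal (C * M * (1 + t) ^ (-(1 / 2 : ℝ) * ((d : ℝ) - α - d / p.toReal)))) ∧
    (∃ C > (0 : ℝ), ∀ M : ℝ, 0 < M → ∀ t : ℝ, 0 ≤ t →
      ∀ u : EuclideanSpace ℝ (Fin d) → EuclideanSpace ℝ (Fin d), Measurable u →
      (∀ᵐ x : EuclideanSpace ℝ (Fin d) ∂volume,
        ‖u x‖ ≤ M * min ((1 + ‖x‖) ^ (-(d : ℝ))) ((1 + t) ^ (-(d : ℝ) / 2))) →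
      eLpNorm (fun x => (1 + ‖x‖) ^ (d : ℝ) • u x) ⊤ volume ≤ ENNReal.ofReal (C * M)) := by
  constructor
  · intro α hα p hp1 hcond
    by_cases hpt : p = ⊤
    · -- case p = ∞
      subst hpt
      refine ⟨2 ^ d, by positivity, ?_⟩
      intro M hM t ht u hu hbound
      have ht1 : (0:ℝ) ≤ 1 + t := by linarith
      simp only [ENNReal.toReal_top, div_zero] at hcond ⊢
      have hαd : α - (d:ℝ) ≤ 0 := by linarith
      rw [eLpNorm_exponent_top]
      apply eLpNormEssSup_le_of_ae_bound (C := 2 ^ d * M * (1 + t) ^ (-(1/2 : ℝ) * ((d:ℝ) - α - 0)))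
      filter_upwards [hbound] with x hx
      have hkey := stmt6_aux_pt d hα ht hM.le (norm_nonneg x) (norm_nonneg (u x)) hx
      have h1 : ‖(1 + ‖x‖) ^ α • u x‖ = (1 + ‖x‖) ^ α * ‖u x‖ := by
        rw [norm_smul, Real.norm_eq_abs, abs_of_nonneg (by positivity)]
      rw [h1]
      refine le_trans hkey ?_
      have hs1 : (1:ℝ) ≤ (1 + t) ^ (2⁻¹ : ℝ) := Real.one_le_rpow (by linarith) (by norm_num)
      have h2 : ((1 + t) ^ (2⁻¹ : ℝ) + ‖x‖) ^ (α - (d:ℝ))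
          ≤ ((1 + t) ^ (2⁻¹ : ℝ)) ^ (α - (d:ℝ)) :=
        Real.rpow_le_rpow_of_nonpos (by linarith) (by linarith [norm_nonneg x]) hαd
      have h3 : ((1 + t) ^ (2⁻¹ : ℝ)) ^ (α - (d:ℝ)) = (1 + t) ^ (-(1/2 : ℝ) * ((d:ℝ) - α - 0)) := by
        rw [← Real.rpow_mul ht1]
        ring_nf
      rw [← h3]
      exact mul_le_mul_of_nonneg_left h2 (by positivity)
    · -- case p < ∞
      have hp0 : p ≠ 0 := by
        intro h; rw [h] at hp1; exact (not_lt.mpr bot_le) hp1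
      set q : ℝ := p.toReal with hq_def
      have hq1 : 1 < q := by
        have := (ENNReal.toReal_lt_toReal (by simp) hpt).mpr hp1
        simpa using this
      have hq0 : (0:ℝ) < q := by linarith
      have hγ : (d : ℝ) < ((d : ℝ) - α) * q := by
        rw [← div_lt_iff₀ hq0] at *
        · linarith
      set J : ℝ≥0∞ := ∫⁻ y : EuclideanSpace ℝ (Fin d),
          ENNReal.ofReal ((1 + ‖y‖) ^ (-(((d : ℝ) - α) * q))) ∂volume with hJ_def
      set K : ℝ := J.toReal ^ (1/q) with hK_def
      have hK0 : 0 ≤ K := by positivity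
      refine ⟨2 ^ d * (K + 1), by positivity, ?_⟩
      intro M hM t ht u hu hbound
      have ht1 : (0:ℝ) ≤ 1 + t := by linarith
      set s : ℝ := (1 + t) ^ (2⁻¹ : ℝ) with hs_def
      have hs1 : (1:ℝ) ≤ s := Real.one_le_rpow (by linarith) (by norm_num)
      have hs0 : (0:ℝ) < s := lt_of_lt_of_le one_pos hs1
      have hmono : eLpNorm (fun x : EuclideanSpace ℝ (Fin d) => (1 + ‖x‖) ^ α • u x) p volume
          ≤ eLpNorm (fun x : EuclideanSpace ℝ (Fin d) =>
              (2 ^ d * M) * (s + ‖x‖) ^ (α - d)) p volume := by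
        apply eLpNorm_mono_ae
        filter_upwards [hbound] with x hx
        have h1 : ‖(1 + ‖x‖) ^ α • u x‖ = (1 + ‖x‖) ^ α * ‖u x‖ := by
          rw [norm_smul, Real.norm_eq_abs, abs_of_nonneg (by positivity)]
        rw [h1, Real.norm_of_nonneg (by positivity)]
        have := stmt6_aux_pt d hα ht hM.le (norm_nonneg x) (norm_nonneg (u x)) hx
        rw [← hs_def] at this
        linarith
      refine le_trans hmono ?_
      rw [stmt6_aux_g d hq0 hγ hs0 (by positivity : (0:ℝ) ≤ 2^d * M) hp0 hpt hq_def.symm,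
        ← hJ_def, ← hK_def]
      apply ENNReal.ofReal_le_ofReal
      have hsexp : s ^ (α - (d:ℝ) + (d:ℝ)/q) = (1 + t) ^ (-(1/2 : ℝ) * ((d:ℝ) - α - (d:ℝ)/q)) := by
        rw [hs_def, ← Real.rpow_mul ht1]
        ring_nf
      rw [hsexp]
      have hpos : (0:ℝ) ≤ M * (1 + t) ^ (-(1/2 : ℝ) * ((d:ℝ) - α - (d:ℝ)/q)) := by positivity
      calc 2 ^ d * M * K * (1 + t) ^ (-(1/2 : ℝ) * ((d:ℝ) - α - (d:ℝ)/q))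
          = (2 ^ d * K) * (M * (1 + t) ^ (-(1/2 : ℝ) * ((d:ℝ) - α - (d:ℝ)/q))) := by ring
        _ ≤ (2 ^ d * (K + 1)) * (M * (1 + t) ^ (-(1/2 : ℝ) * ((d:ℝ) - α - (d:ℝ)/q))) := by
            exact mul_le_mul_of_nonneg_right
              (mul_le_mul_of_nonneg_left (by linarith) (by positivity)) hpos
        _ = 2 ^ d * (K + 1) * M * (1 + t) ^ (-(1/2 : ℝ) * ((d:ℝ) - α - (d:ℝ)/q)) := by ring
  · refine ⟨1, one_pos, ?_⟩
    intro M hM t ht u hu hbound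
    rw [eLpNorm_exponent_top, one_mul]
    apply eLpNormEssSup_le_of_ae_bound (C := M)
    filter_upwards [hbound] with x hx
    have h1 : ‖(1 + ‖x‖) ^ (d:ℝ) • u x‖ = (1 + ‖x‖) ^ (d:ℝ) * ‖u x‖ := by
      rw [norm_smul, Real.norm_eq_abs, abs_of_nonneg (by positivity)]
    have h1x : (0:ℝ) < 1 + ‖x‖ := by positivity
    have h2 : ‖u x‖ ≤ M * (1 + ‖x‖) ^ (-(d:ℝ)) :=
      le_trans hx (mul_le_mul_of_nonneg_left (min_le_left _ _) hM.le)
    calc ‖(1 + ‖x‖) ^ (d:ℝ) • u x‖ = (1 + ‖x‖) ^ (d:ℝ) * ‖u x‖ := h1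
      _ ≤ (1 + ‖x‖) ^ (d:ℝ) * (M * (1 + ‖x‖) ^ (-(d:ℝ))) :=
          mul_le_mul_of_nonneg_left h2 (by positivity)
      _ = M * ((1 + ‖x‖) ^ (d:ℝ) * (1 + ‖x‖) ^ (-(d:ℝ))) := by ring
      _ = M := by rw [← Real.rpow_add h1x]; simp
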